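/- Let k ≥ 2 and let (Σ_k, σ) be the k-symbol full shift. Then the set Rec(Σ_k) \ BR(Σ_k) of points that are recurrent but not Banach recurrent is dense in Σ_k and contains an uncountable DC1-scrambled subset. -/

import Mathlib

open Filter Topology MeasureTheory

/-- Upper density of a set of naturals. -/
noncomputable def upperDensity (S : Set ℕ) : ℝ :=
  Filter.limsup (fun n => ((S ∩ Set.Iio n).ncard : ℝ) / n) Filter.atTop

/-- Lower density of a set of naturals. -/
noncomputable def lowerDensity (S : Set ℕ) : ℝ :=
  Filter.liminf (fun n => ((S ∩ Set.Iio n).ncard : ℝ) / n) Filter.atTop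

/-- Banach upper density: limsup over the interval length of the maximal
proportion of `S` in an interval of that length. -/
noncomputable def banachUpperDensity (S : Set ℕ) : ℝ :=
  Filter.limsup (fun N => ⨆ a : ℕ, ((S ∩ Set.Ico a (a + N)).ncard : ℝ) / N) Filter.atTop

/-- Banach lower density. -/
noncomputable def banachLowerDensity (S : Set ℕ) : ℝ :=
  Filter.liminf (fun N => ⨅ a : ℕ, ((S ∩ Set.Ico a (a + N)).ncard : ℝ) / N) Filter.atTop

/-- The shift map on the full shift `Σ_k = {0, …, k-1}^ℕ`. -/
def shift {k : ℕ} (x : ℕ → Fin k) : ℕ → Fin k := fun n => x (n + 1)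

/-- The metric `d(x,y) = Σ_{n ≥ 1} δ(x_n, y_n)/2^n` on `Σ_k` (sequences indexed from `0`). -/
noncomputable def shiftDist {k : ℕ} (x y : ℕ → Fin k) : ℝ :=
  ∑' n : ℕ, if x n = y n then 0 else (1 / 2) ^ (n + 1)

/-- The open ball `B_ε(x)` for the metric `shiftDist`. -/
def sball {k : ℕ} (x : ℕ → Fin k) (ε : ℝ) : Set (ℕ → Fin k) := {y | shiftDist x y < ε}

/-- `N(x, U) = {n ≥ 1 : σ^n(x) ∈ U}`. -/
def visits {k : ℕ} (x : ℕ → Fin k) (U : Set (ℕ → Fin k)) : Set ℕ :=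
  {n | 1 ≤ n ∧ shift^[n] x ∈ U}

/-- A point is recurrent if `N(x, B_ε(x)) ≠ ∅` for every `ε > 0`. -/
def Recurrent {k : ℕ} (x : ℕ → Fin k) : Prop := ∀ ε > (0 : ℝ), (visits x (sball x ε)).Nonempty

/-- A point is Banach recurrent if `N(x, B_ε(x))` has positive Banach upper density
for every `ε > 0`. -/
def BanachRecurrent {k : ℕ} (x : ℕ → Fin k) : Prop :=
  ∀ ε > (0 : ℝ), 0 < banachUpperDensity (visits x (sball x ε))

/-- Statistical ω-limit set w.r.t. a density notion `ξ`:
`ω_ξ(x) = {y : ξ(N(x, B_ε(y))) > 0 for all ε > 0}`. -/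
def statOmega {k : ℕ} (ξ : Set ℕ → ℝ) (x : ℕ → Fin k) : Set (ℕ → Fin k) :=
  {y | ∀ ε > (0 : ℝ), 0 < ξ (visits x (sball y ε))}

/-- The usual ω-limit set of `x` under the shift. -/
def omegaLim {k : ℕ} (x : ℕ → Fin k) : Set (ℕ → Fin k) :=
  {y | ∀ ε > (0 : ℝ), ∀ N : ℕ, ∃ n ≥ N, shift^[n] x ∈ sball y ε}

/-- Density of a subset of `Σ_k` w.r.t. the metric `shiftDist`. -/
def ShiftDense {k : ℕ} (A : Set (ℕ → Fin k)) : Prop :=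
  ∀ x : ℕ → Fin k, ∀ ε > (0 : ℝ), ∃ y ∈ A, shiftDist x y < ε

/-- Closure of a subset of `Σ_k` w.r.t. the metric `shiftDist`. -/
def shiftClosure {k : ℕ} (A : Set (ℕ → Fin k)) : Set (ℕ → Fin k) :=
  {z | ∀ ε > (0 : ℝ), ∃ y ∈ A, shiftDist z y < ε}

/-- `Φ^{(n)}_{xy}(t)`: the proportion of times `0 ≤ i < n` with `d(σ^i x, σ^i y) < t`. -/
noncomputable def PhiN {k : ℕ} (x y : ℕ → Fin k) (n : ℕ) (t : ℝ) : ℝ :=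
  (({i | i < n ∧ shiftDist (shift^[i] x) (shift^[i] y) < t}).ncard : ℝ) / n

/-- A pair is DC1 (distributionally chaotic of type 1) if `Φ_{xy}(s) = 0` for some `s > 0`
and `Φ*_{xy}(t) = 1` for all `t > 0`. -/
def DC1Pair {k : ℕ} (x y : ℕ → Fin k) : Prop :=
  (∃ s > (0 : ℝ), Filter.liminf (fun n => PhiN x y n s) Filter.atTop = 0) ∧
  (∀ t > (0 : ℝ), Filter.limsup (fun n => PhiN x y n t) Filter.atTop = 1)

/-- A set with at least two points is DC1-scrambled if every pair of distinct points is DC1. -/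
def DC1Scrambled {k : ℕ} (S : Set (ℕ → Fin k)) : Prop :=
  S.Nontrivial ∧ ∀ x ∈ S, ∀ y ∈ S, x ≠ y → DC1Pair x y

/-- `strictOrEq true A B` means `A ⊊ B`; `strictOrEq false A B` means `A = B`. -/
def strictOrEq {α : Type*} (b : Bool) (A B : Set α) : Prop := if b then A ⊂ B else A = B

/-- The patterns of (strict ⊊ = `true` / equality = `false`) for the three inclusions
`ω_{B_*} ⊆ ω_{d̲} ⊆ ω_{d̄} ⊆ ω_{B*}` in Cases (1)–(6). -/
def caseFlags : Fin 6 → Bool × Bool × Bool :=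
  ![(true, false, false), (true, false, true), (false, true, false),
    (true, true, false), (false, true, true), (true, true, true)]

/-- `x` satisfies Case (i), i = 1,…,6: the chain
`ω_{B_*}(x) ⊆ ω_{d̲}(x) ⊆ ω_{d̄}(x) ⊆ ω_{B*}(x) = ω_σ(x)` with strictness pattern given by
`caseFlags i`, and the last inclusion an equality. -/
def SatCase {k : ℕ} (i : Fin 6) (x : ℕ → Fin k) : Prop :=
  strictOrEq (caseFlags i).1 (statOmega banachLowerDensity x) (statOmega lowerDensity x) ∧
  strictOrEq (caseFlags i).2.1 (statOmega lowerDensity x) (statOmega upperDensity x) ∧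
  strictOrEq (caseFlags i).2.2 (statOmega upperDensity x) (statOmega banachUpperDensity x) ∧
  statOmega banachUpperDensity x = omegaLim x

/-- `x` satisfies Case (i'), i = 1,…,6: as in Case (i) but the last inclusion
`ω_{B*}(x) ⊆ ω_σ(x)` is strict. -/
def SatCase' {k : ℕ} (i : Fin 6) (x : ℕ → Fin k) : Prop :=
  strictOrEq (caseFlags i).1 (statOmega banachLowerDensity x) (statOmega lowerDensity x) ∧
  strictOrEq (caseFlags i).2.1 (statOmega lowerDensity x) (statOmega upperDensity x) ∧
  strictOrEq (caseFlags i).2.2 (statOmega upperDensity x) (statOmega banachUpperDensity x) ∧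
  statOmega banachUpperDensity x ⊂ omegaLim x


namespace ThmA

def UU (m : ℕ) : ℕ → ℕ
  | 0 => m
  | t+1 => (t+2) * 8^(t+2) * UU m t

def MM (m t : ℕ) : ℕ := ((t+2) * 8^(t+2) - 1) * UU m t

def gg (m t : ℕ) : ℕ := ((t+2) * 8^(t+2) - 2) * UU m t

variable {m : ℕ}

lemma coeff_ge (t : ℕ) : 128 ≤ (t+2) * 8^(t+2) := by
  have h8 : 8^2 ≤ 8^(t+2) := Nat.pow_le_pow_right (by norm_num) (by omega)
  have : 2 * 8^2 ≤ (t+2) * 8^(t+2) := Nat.mul_le_mul (by omega) h8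
  omega

lemma UU_pos (hm : 1 ≤ m) (t : ℕ) : 0 < UU m t := by
  induction t with
  | zero => exact hm
  | succ t ih =>
    have := coeff_ge t
    have : 0 < (t+2) * 8^(t+2) := by omega
    simpa [UU] using Nat.mul_pos this ih

lemma UU_succ (t : ℕ) : UU m (t+1) = UU m t + MM m t := by
  have := coeff_ge t
  simp only [UU, MM]
  have h1 : ((t+2) * 8^(t+2) - 1) * UU m t = (t+2) * 8^(t+2) * UU m t - UU m t := by
    rw [Nat.sub_mul, one_mul]
  have h2 : UU m t ≤ (t+2) * 8^(t+2) * UU m t :=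
    Nat.le_mul_of_pos_left _ (by omega)
  omega

lemma MM_eq (t : ℕ) : MM m t = UU m t + gg m t := by
  have := coeff_ge t
  simp only [MM, gg]
  have h1 : ((t+2) * 8^(t+2) - 1) * UU m t = (t+2) * 8^(t+2) * UU m t - UU m t := by
    rw [Nat.sub_mul, one_mul]
  have h2 : ((t+2) * 8^(t+2) - 2) * UU m t = (t+2) * 8^(t+2) * UU m t - 2 * UU m t := by
    rw [Nat.sub_mul]
  have h3 : 2 * UU m t ≤ (t+2) * 8^(t+2) * UU m t :=
    Nat.mul_le_mul_right _ (by omega)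
  omega

lemma UU_le_succ (t : ℕ) : UU m t ≤ UU m (t+1) := by
  have := UU_succ (m := m) t; omega

lemma UU_mono {s t : ℕ} (h : s ≤ t) : UU m s ≤ UU m t := by
  induction t with
  | zero => simp_all
  | succ t ih =>
    rcases Nat.lt_or_ge s (t+1) with h'|h'
    · exact le_trans (ih (by omega)) (UU_le_succ t)
    · have : s = t+1 := by omega
      simp [this]

lemma hundred_UU_le_MM (t : ℕ) : 100 * UU m t ≤ MM m t := by
  have := coeff_ge t
  have : 100 ≤ (t+2) * 8^(t+2) - 1 := by omega
  calc 100 * UU m t ≤ ((t+2) * 8^(t+2) - 1) * UU m t := Nat.mul_le_mul_right _ this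
  _ = MM m t := rfl

lemma gg_pos (hm : 1 ≤ m) (t : ℕ) : 0 < gg m t := by
  have := coeff_ge t
  have h : 0 < (t+2) * 8^(t+2) - 2 := by omega
  exact Nat.mul_pos h (UU_pos hm t)

lemma gg_le_MM (t : ℕ) : gg m t ≤ MM m t := by have := MM_eq (m := m) t; omega

lemma gg_lt_UU_succ (hm : 1 ≤ m) (t : ℕ) : gg m t < UU m (t+1) := by
  have h1 := UU_succ (m := m) t
  have h2 := MM_eq (m := m) t
  have := UU_pos hm t
  omega

lemma UU_succ_le_gg_succ (t : ℕ) : UU m (t+1) ≤ gg m (t+1) := by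
  have h := coeff_ge (t+1)
  have h2 : 1 * UU m (t+1) ≤ ((t+1+2) * 8^(t+1+2) - 2) * UU m (t+1) :=
    Nat.mul_le_mul_right _ (by omega)
  simpa [gg] using h2

lemma gg_mono (hm : 1 ≤ m) {s t : ℕ} (h : s ≤ t) : gg m s ≤ gg m t := by
  induction t with
  | zero => simp_all
  | succ t ih =>
    rcases Nat.lt_or_ge s (t+1) with h'|h'
    · have h1 := ih (by omega)
      have h2 := gg_lt_UU_succ hm t
      have h3 := UU_succ_le_gg_succ (m := m) t
      omega
    · have : s = t+1 := by omega
      simp [this]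

lemma pow8_le_UU (hm : 1 ≤ m) (t : ℕ) : 8^t ≤ UU m t := by
  induction t with
  | zero => simpa [UU] using hm
  | succ t ih =>
    have h : 8 * 8^t ≤ (t+2) * 8^(t+2) * UU m t := by
      have h2 : 8 ≤ (t+2) * 8^(t+2) := le_trans (by norm_num) (coeff_ge t)
      calc 8 * 8^t ≤ ((t+2) * 8^(t+2)) * 8^t := Nat.mul_le_mul_right _ h2
      _ ≤ ((t+2) * 8^(t+2)) * UU m t := Nat.mul_le_mul_left _ ih
    calc 8^(t+1) = 8 * 8^t := by ring
    _ ≤ (t+2) * 8^(t+2) * UU m t := h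
    _ = UU m (t+1) := rfl

lemma self_lt_UU (hm : 1 ≤ m) (t : ℕ) : t < UU m t :=
  lt_of_lt_of_le (Nat.lt_pow_self (n := t) (by norm_num)) (pow8_le_UU hm t)

lemma UU_zero : UU m 0 = m := rfl

lemma gg_zero : gg m 0 = 126 * m := by norm_num [gg, UU]

lemma UU_one : UU m 1 = 128 * m := by norm_num [UU]

lemma MM_zero : MM m 0 = 127 * m := by norm_num [MM, UU]


section Construction

variable {k : ℕ} (m : ℕ) (w fil : ℕ → Fin k)

/-- Value of the constructed point computed at scale `t`. -/
def val : ℕ → ℕ → Fin k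
  | 0, i => w i
  | t+1, i =>
    if i < UU m t then val t i
    else if i < UU m t + gg m t then fil t
    else val t (i - (UU m t + gg m t))

/-- The constructed point. -/
def YY : ℕ → Fin k := fun i => val m w fil (i+1) i

lemma UU_succ_split (t : ℕ) : UU m (t+1) = UU m t + gg m t + UU m t := by
  have h1 := UU_succ (m := m) t
  have h2 := MM_eq (m := m) t
  omega

variable {m}

lemma val_succ_of_lt {t i : ℕ} (h : i < UU m t) :
    val m w fil (t+1) i = val m w fil t i := by
  simp [val, h]

lemma val_agree (d : ℕ) {t i : ℕ} (h : i < UU m t) :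
    val m w fil (t+d) i = val m w fil t i := by
  induction d with
  | zero => rfl
  | succ d ih =>
    have hlt : i < UU m (t+d) := lt_of_lt_of_le h (UU_mono (Nat.le_add_right _ _))
    calc val m w fil (t+(d+1)) i = val m w fil ((t+d)+1) i := by ring_nf
    _ = val m w fil (t+d) i := val_succ_of_lt w fil hlt
    _ = val m w fil t i := ih

lemma YY_eq (hm : 1 ≤ m) {t i : ℕ} (h : i < UU m t) :
    YY m w fil i = val m w fil t i := by
  have h1 : i < UU m (i+1) := lt_trans (Nat.lt_succ_self i) (self_lt_UU hm (i+1))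
  have e1 : val m w fil ((i+1) + (t + 1)) i = val m w fil (i+1) i := val_agree w fil _ h1
  have e2 : val m w fil (t + (i + 2)) i = val m w fil t i := val_agree w fil _ h
  have : (i+1) + (t+1) = t + (i+2) := by ring
  rw [YY, ← e2, ← this, e1]

lemma YY_base (hm : 1 ≤ m) {r : ℕ} (h : r < m) : YY m w fil r = w r := by
  have : r < UU m 0 := h
  rw [YY_eq w fil hm this]; rfl

lemma YY_filler (hm : 1 ≤ m) {t j : ℕ} (h : j < gg m t) :
    YY m w fil (UU m t + j) = fil t := by
  have hb : UU m t + j < UU m (t+1) := by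
    have := UU_succ_split m t; have := UU_pos hm t; omega
  rw [YY_eq w fil hm hb]
  simp only [val]
  rw [if_neg (by omega), if_pos (by omega)]

lemma YY_shift (hm : 1 ≤ m) {t i : ℕ} (h : i < UU m t) :
    YY m w fil (UU m t + gg m t + i) = YY m w fil i := by
  have hb : UU m t + gg m t + i < UU m (t+1) := by
    have := UU_succ_split m t; omega
  rw [YY_eq w fil hm hb, YY_eq w fil hm h]
  simp only [val]
  rw [if_neg (by omega), if_neg (by omega)]
  congr 1
  omega

/-- Sum of the `MM`-values over a finite set of levels. -/
def fsum (m : ℕ) (F : Finset ℕ) : ℕ := ∑ s ∈ F, MM m s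

lemma fsum_empty : fsum m ∅ = 0 := rfl

lemma fsum_range (t : ℕ) : fsum m (Finset.range t) + m = UU m t := by
  induction t with
  | zero => simp [fsum, UU]
  | succ t ih =>
    have h := UU_succ (m := m) t
    rw [fsum, Finset.sum_range_succ]
    rw [fsum] at ih
    omega

lemma fsum_le {F : Finset ℕ} {t : ℕ} (h : F ⊆ Finset.range t) :
    fsum m F + m ≤ UU m t := by
  have h1 : fsum m F ≤ fsum m (Finset.range t) :=
    Finset.sum_le_sum_of_subset h
  have := fsum_range (m := m) t
  omega

lemma fsum_insert {t : ℕ} {F : Finset ℕ} (h : t ∉ F) :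
    fsum m (insert t F) = MM m t + fsum m F := Finset.sum_insert h

lemma fsum_erase_le {F : Finset ℕ} {t s₀ : ℕ} (hF : F ⊆ Finset.range t) (hs : s₀ ∉ F) (hst : s₀ < t) :
    fsum m F + MM m s₀ + m ≤ UU m t := by
  have h1 : insert s₀ F ⊆ Finset.range t := by
    intro x hx
    rcases Finset.mem_insert.1 hx with rfl | hx
    · exact Finset.mem_range.2 hst
    · exact hF hx
  have h2 := fsum_le (m := m) h1
  rw [fsum_insert hs] at h2
  omega

/-- Least level not in `F`. -/
noncomputable def mex (F : Finset ℕ) : ℕ := Nat.find (Infinite.exists_notMem_finset F)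

lemma mex_not_mem (F : Finset ℕ) : mex F ∉ F := by
  exact Nat.find_spec (Infinite.exists_notMem_finset F)

lemma mem_of_lt_mex {F : Finset ℕ} {s : ℕ} (h : s < mex F) : s ∈ F := by
  have := Nat.find_min (Infinite.exists_notMem_finset F) h
  exact not_not.1 this

lemma mex_eq {F : Finset ℕ} {s : ℕ} (h1 : s ∉ F) (h2 : ∀ s' < s, s' ∈ F) : mex F = s := by
  refine (Nat.find_eq_iff _).2 ⟨h1, fun n hn => not_not.2 (h2 n hn)⟩

lemma mex_range (t : ℕ) : mex (Finset.range t) = t :=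
  mex_eq (by simp) (fun s hs => Finset.mem_range.2 hs)

lemma YY_copy (hm : 1 ≤ m) :
    ∀ t, ∀ F : Finset ℕ, F ⊆ Finset.range t → ∀ r, r < m →
      YY m w fil (fsum m F + r) = w r := by
  intro t
  induction t with
  | zero =>
    intro F hF r hr
    have : F = ∅ := Finset.subset_empty.1 (by simpa using hF)
    subst this
    simpa [fsum_empty] using YY_base w fil hm hr
  | succ t ih =>
    intro F hF r hr
    by_cases ht : t ∈ F
    · have hF' : F.erase t ⊆ Finset.range t := by
        intro x hx
        have hx1 := Finset.mem_of_mem_erase hx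
        have hx2 := Finset.ne_of_mem_erase hx
        have := Finset.mem_range.1 (hF hx1)
        exact Finset.mem_range.2 (by omega)
      have hFe : F = insert t (F.erase t) := (Finset.insert_erase ht).symm
      have hsum : fsum m F = MM m t + fsum m (F.erase t) := by
        conv_lhs => rw [hFe]
        exact fsum_insert (Finset.notMem_erase _ _)
      have hlt : fsum m (F.erase t) + r < UU m t := by
        have := fsum_le (m := m) hF'
        omega
      have : fsum m F + r = UU m t + gg m t + (fsum m (F.erase t) + r) := by
        rw [hsum, MM_eq]; ring
      rw [this, YY_shift w fil hm hlt]
      exact ih _ hF' r hr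
    · have : F ⊆ Finset.range t := by
        intro x hx
        have := Finset.mem_range.1 (hF hx)
        have : x ≠ t := fun h => ht (h ▸ hx)
        exact Finset.mem_range.2 (by omega)
      exact ih _ this r hr

lemma YY_fillafter (hm : 1 ≤ m) :
    ∀ t, ∀ F : Finset ℕ, F ⊆ Finset.range t → ∀ j, j < gg m (mex F) →
      YY m w fil (fsum m F + m + j) = fil (mex F) := by
  intro t
  induction t with
  | zero =>
    intro F hF j hj
    have hFe : F = ∅ := Finset.subset_empty.1 (by simpa using hF)
    subst hFe
    have hm0 : mex (∅ : Finset ℕ) = 0 := mex_eq (by simp) (by omega)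
    rw [hm0] at hj ⊢
    have := YY_filler w fil hm (t := 0) hj
    simpa [fsum_empty, UU_zero] using this
  | succ t ih =>
    intro F hF j hj
    by_cases ht : t ∈ F
    · by_cases hFr : F = Finset.range (t+1)
      · subst hFr
        rw [mex_range] at hj ⊢
        have hpos : fsum m (Finset.range (t+1)) + m = UU m (t+1) := fsum_range _
        rw [hpos]
        exact YY_filler w fil hm hj
      · have hF' : F.erase t ⊆ Finset.range t := by
          intro x hx
          have hx1 := Finset.mem_of_mem_erase hx
          have hx2 := Finset.ne_of_mem_erase hx
          have := Finset.mem_range.1 (hF hx1)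
          exact Finset.mem_range.2 (by omega)
        have hF'ne : F.erase t ≠ Finset.range t := by
          intro h
          apply hFr
          have : F = insert t (F.erase t) := (Finset.insert_erase ht).symm
          rw [this, h, Finset.range_add_one]
        have hmex' : mex (F.erase t) < t := by
          by_contra h
          push_neg at h
          apply hF'ne
          apply Finset.Subset.antisymm hF'
          intro x hx
          exact mem_of_lt_mex (lt_of_lt_of_le (Finset.mem_range.1 hx) h)
        have hmexF : mex F = mex (F.erase t) := by
          refine mex_eq ?_ ?_
          · intro hmem
            have h1 : mex (F.erase t) ≠ t := by omega
            have : mex (F.erase t) ∈ F.erase t := Finset.mem_erase.2 ⟨h1, hmem⟩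
            exact mex_not_mem _ this
          · intro s' hs'
            exact Finset.mem_of_mem_erase (mem_of_lt_mex hs')
        have hFe : F = insert t (F.erase t) := (Finset.insert_erase ht).symm
        have hsum : fsum m F = MM m t + fsum m (F.erase t) := by
          conv_lhs => rw [hFe]
          exact fsum_insert (Finset.notMem_erase _ _)
        have hjlt : j < gg m (mex (F.erase t)) := by rw [← hmexF]; exact hj
        have hboundl : fsum m (F.erase t) + MM m (mex (F.erase t)) + m ≤ UU m t :=
          fsum_erase_le hF' (by rw [← hmexF]; exact fun hc => mex_not_mem F (Finset.mem_of_mem_erase hc)) (by omega)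
        have hlt : fsum m (F.erase t) + m + j < UU m t := by
          have := gg_le_MM (m := m) (mex (F.erase t))
          omega
        have heq : fsum m F + m + j = UU m t + gg m t + (fsum m (F.erase t) + m + j) := by
          rw [hsum, MM_eq]; ring
        rw [heq, YY_shift w fil hm hlt, hmexF]
        exact ih _ hF' j hjlt
    · have hsub : F ⊆ Finset.range t := by
        intro x hx
        have := Finset.mem_range.1 (hF hx)
        have : x ≠ t := fun h => ht (h ▸ hx)
        exact Finset.mem_range.2 (by omega)
      exact ih _ hsub j hj

end Construction


section Construction2

variable {k m : ℕ} (w fil : ℕ → Fin k)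

lemma classify (hm : 1 ≤ m) :
    ∀ t, ∀ i, i < UU m t →
      (∃ F : Finset ℕ, F ⊆ Finset.range t ∧ ∃ r, r < m ∧ i = fsum m F + r) ∨
      (∃ s, s < t ∧ ∃ F : Finset ℕ, F ⊆ Finset.Ico (s+1) t ∧ ∃ j, j < gg m s ∧
        i = fsum m F + UU m s + j) := by
  intro t
  induction t with
  | zero =>
    intro i hi
    exact Or.inl ⟨∅, by simp, i, hi, by simp [fsum_empty]⟩
  | succ t ih =>
    intro i hi
    rcases Nat.lt_or_ge i (UU m t) with h1 | h1
    · rcases ih i h1 with ⟨F, hF, r, hr, he⟩ | ⟨s, hs, F, hF, j, hj, he⟩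
      · exact Or.inl ⟨F, hF.trans (Finset.range_subset_range.2 (by omega)), r, hr, he⟩
      · refine Or.inr ⟨s, by omega, F, hF.trans (Finset.Ico_subset_Ico (le_refl _) (by omega)), j, hj, he⟩
    · rcases Nat.lt_or_ge i (UU m t + gg m t) with h2 | h2
      · exact Or.inr ⟨t, by omega, ∅, by simp, i - UU m t, by omega, by simp [fsum_empty]; omega⟩
      · have hsplit := UU_succ_split m t
        have h3 : i - (UU m t + gg m t) < UU m t := by omega
        rcases ih _ h3 with ⟨F, hF, r, hr, he⟩ | ⟨s, hs, F, hF, j, hj, he⟩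
        · refine Or.inl ⟨insert t F, ?_, r, hr, ?_⟩
          · intro x hx
            rcases Finset.mem_insert.1 hx with rfl | hx
            · exact Finset.mem_range.2 (by omega)
            · exact Finset.mem_range.2 (by have := Finset.mem_range.1 (hF hx); omega)
          · have htF : t ∉ F := fun hc => by have := Finset.mem_range.1 (hF hc); omega
            rw [fsum_insert htF]
            have hMM := MM_eq (m := m) t
            omega
        · refine Or.inr ⟨s, by omega, insert t F, ?_, j, hj, ?_⟩
          · intro x hx
            rcases Finset.mem_insert.1 hx with rfl | hx
            · exact Finset.mem_Ico.2 ⟨by omega, by omega⟩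
            · have := Finset.mem_Ico.1 (hF hx); exact Finset.mem_Ico.2 ⟨this.1, by omega⟩
          · have htF : t ∉ F := fun hc => by have := Finset.mem_Ico.1 (hF hc); omega
            rw [fsum_insert htF]
            have hMM := MM_eq (m := m) t
            omega

lemma YY_fillpos (hm : 1 ≤ m) {s t j : ℕ} {F : Finset ℕ}
    (hF : F ⊆ Finset.Ico (s+1) t) (hj : j < gg m s) :
    YY m w fil (fsum m F + UU m s + j) = fil s := by
  classical
  set G : Finset ℕ := F ∪ Finset.range s with hG
  have hdisj : Disjoint F (Finset.range s) := by
    refine Finset.disjoint_left.2 ?_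
    intro x hx hx'
    have := (Finset.mem_Ico.1 (hF hx)).1
    have := Finset.mem_range.1 hx'
    omega
  have hsum : fsum m G = fsum m F + fsum m (Finset.range s) := Finset.sum_union hdisj
  have hmexG : mex G = s := by
    refine mex_eq ?_ ?_
    · intro hc
      rcases Finset.mem_union.1 hc with hc | hc
      · have := (Finset.mem_Ico.1 (hF hc)).1; omega
      · exact absurd (Finset.mem_range.1 hc) (by omega)
    · intro s' hs'
      exact Finset.mem_union.2 (Or.inr (Finset.mem_range.2 hs'))
  have hGsub : G ⊆ Finset.range (t + s) := by
    intro x hx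
    rcases Finset.mem_union.1 hx with hx | hx
    · have := (Finset.mem_Ico.1 (hF hx)).2; exact Finset.mem_range.2 (by omega)
    · have := Finset.mem_range.1 hx; exact Finset.mem_range.2 (by omega)
  have hidx : fsum m G + m + j = fsum m F + UU m s + j := by
    have := fsum_range (m := m) s
    omega
  have := YY_fillafter w fil hm (t + s) G hGsub j (by rw [hmexG]; exact hj)
  rw [hidx, hmexG] at this
  exact this

lemma backward (hm : 1 ≤ m) {z o : Fin k} (hzo : z ≠ o) (hw : w (m-1) = o) (hf0 : fil 0 = z)
    (n : ℕ)
    (hA : YY m w fil (n + (m-1)) = o)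
    (hB : ∀ j, j < gg m 0 → YY m w fil (n + m + j) = z)
    (hC : YY m w fil (n + MM m 0 + (m-1)) = o) :
    ∃ F : Finset ℕ, (∀ s ∈ F, 1 ≤ s) ∧ n = fsum m F := by
  classical
  set i₀ := n + (m-1) with hi₀
  obtain ⟨t, hti⟩ : ∃ t, i₀ < UU m t := ⟨i₀ + 1, lt_trans (Nat.lt_succ_self _) (self_lt_UU hm _)⟩
  have hgg0 : gg m 0 = 126 * m := gg_zero
  have hMM0 : MM m 0 = 127 * m := MM_zero
  rcases classify hm t i₀ hti with ⟨F, hF, r, hr, he⟩ | ⟨s, hs, F, hF, j, hj, he⟩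
  · -- copy case
    by_cases hrm : r = m - 1
    · subst hrm
      have hn : n = fsum m F := by omega
      by_cases h0 : (0 : ℕ) ∈ F
      · exfalso
        set s₀ := mex F with hs₀
        have hs₀1 : 1 ≤ s₀ := by
          rcases Nat.eq_zero_or_pos s₀ with h | h
          · exact absurd h0 (h ▸ mex_not_mem F)
          · exact h
        have hfa : ∀ j, j < gg m s₀ → YY m w fil (n + m + j) = fil s₀ := by
          intro j hj
          have h := YY_fillafter w fil hm t F hF j hj
          rw [hn]
          exact h
        by_cases hfz : fil s₀ = z
        · -- contradiction with hC
          have hglarge : gg m 0 + (m-1) < gg m s₀ := by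
            have h1 : UU m 1 ≤ gg m 1 := UU_succ_le_gg_succ (m := m) 0
            have h2 : gg m 1 ≤ gg m s₀ := gg_mono hm hs₀1
            have h3 : UU m 1 = 128 * m := UU_one
            omega
          have := hfa (gg m 0 + (m-1)) hglarge
          rw [hfz] at this
          have hidx : n + MM m 0 + (m-1) = n + m + (gg m 0 + (m-1)) := by omega
          rw [hidx, this] at hC
          exact hzo hC
        · have h1 := hfa 0 (gg_pos hm s₀)
          have hB0 := hB 0 (by omega)
          exact hfz (h1.symm.trans hB0)
      · exact ⟨F, fun s hs => Nat.pos_of_ne_zero (fun hzz => h0 (hzz ▸ hs)), hn⟩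
    · exfalso
      -- r < m - 1; the marker inside the copy contradicts hB
      have hr' : r < m - 1 := by omega
      have hcopy := YY_copy w fil hm t F hF (m-1) (by omega)
      have hidx : fsum m F + (m-1) = n + m + (m - 2 - r) := by omega
      have hB' := hB (m - 2 - r) (by omega)
      rw [hidx, hB'] at hcopy
      rw [hw] at hcopy
      exact hzo hcopy
  · -- filler case
    exfalso
    have hval : YY m w fil i₀ = fil s := by rw [he]; exact YY_fillpos w fil hm hF hj
    have hfs : fil s = o := by rw [← hval, hi₀]; exact hA
    have hs1 : 1 ≤ s := by
      rcases Nat.eq_zero_or_pos s with h | h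
      · exfalso; rw [h] at hfs; rw [hf0] at hfs; exact hzo hfs
      · exact h
    rcases Nat.lt_or_ge (j+1) (gg m s) with hj1 | hj1
    · have hv := YY_fillpos w fil (s := s) (j := j+1) hm hF hj1
      have hidx : fsum m F + UU m s + (j+1) = n + m + 0 := by omega
      rw [hidx] at hv
      have hB0 := hB 0 (by omega)
      have h6 : fil s = z := hv.symm.trans hB0
      rw [hfs] at h6
      exact hzo h6.symm
    · have hj1' : j + 1 = gg m s := by omega
      have hsF : s ∉ F := fun hc => by have := (Finset.mem_Ico.1 (hF hc)).1; omega
      have hins : insert s F ⊆ Finset.range t := by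
        intro x hx
        rcases Finset.mem_insert.1 hx with rfl | hx
        · exact Finset.mem_range.2 hs
        · exact Finset.mem_range.2 (by have := (Finset.mem_Ico.1 (hF hx)).2; omega)
      have hcopy := YY_copy w fil hm t (insert s F) hins (m-1) (by omega)
      rw [fsum_insert hsF] at hcopy
      have hMMs := MM_eq (m := m) s
      have hidx : MM m s + fsum m F + (m-1) = n + m + (m-1) := by omega
      rw [hidx, hw] at hcopy
      have hB' := hB (m-1) (by omega)
      exact hzo (hB'.symm.trans hcopy)
  
end Construction2


section Metric

variable {k : ℕ}

lemma summable_halfpow : Summable (fun n : ℕ => ((1:ℝ)/2)^(n+1)) := by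
  have h := (summable_geometric_of_lt_one (r := (1:ℝ)/2) (by norm_num) (by norm_num)).mul_left ((1:ℝ)/2)
  apply h.congr
  intro n
  rw [pow_succ]
  ring

lemma summable_sd (x y : ℕ → Fin k) :
    Summable (fun n => if x n = y n then (0:ℝ) else (1/2)^(n+1)) := by
  apply Summable.of_nonneg_of_le (fun n => ?_) (fun n => ?_) summable_halfpow
  · split <;> positivity
  · split
    · positivity
    · exact le_refl _

lemma shiftDist_nonneg (x y : ℕ → Fin k) : 0 ≤ shiftDist x y := by
  apply tsum_nonneg
  intro n
  split <;> positivity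

lemma shiftDist_le_pow {x y : ℕ → Fin k} {L : ℕ} (h : ∀ i, i < L → x i = y i) :
    shiftDist x y ≤ ((1:ℝ)/2)^L := by
  classical
  have hg : Summable (fun n : ℕ => if n < L then (0:ℝ) else (1/2)^(n+1)) := by
    apply Summable.of_nonneg_of_le (fun n => ?_) (fun n => ?_) summable_halfpow
    · split <;> positivity
    · split
      · positivity
      · exact le_refl _
  have hle : shiftDist x y ≤ ∑' n : ℕ, (if n < L then (0:ℝ) else (1/2)^(n+1)) := by
    apply Summable.tsum_le_tsum _ (summable_sd x y) hg
    intro n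
    by_cases hn : n < L
    · simp [hn, h n hn]
    · simp only [hn, if_false]
      split
      · positivity
      · exact le_refl _
  have hsplit := Summable.sum_add_tsum_nat_add (f := fun n : ℕ => if n < L then (0:ℝ) else (1/2)^(n+1)) L hg
  have h1 : (∑ i ∈ Finset.range L, if i < L then (0:ℝ) else (1/2)^(i+1)) = 0 := by
    apply Finset.sum_eq_zero
    intro i hi
    simp [Finset.mem_range.1 hi]
  have h2 : (∑' i : ℕ, (if i + L < L then (0:ℝ) else (1/2)^(i+L+1))) = ((1:ℝ)/2)^L := by
    have he : ∀ i : ℕ, (if i + L < L then (0:ℝ) else (1/2)^(i+L+1)) = ((1:ℝ)/2)^L * (1/2)^(i+1) := by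
      intro i
      rw [if_neg (by omega)]
      rw [show i + L + 1 = L + (i+1) by ring, pow_add]
    rw [tsum_congr he, tsum_mul_left]
    have : (∑' i : ℕ, ((1:ℝ)/2)^(i+1)) = 1 := by
      have h4 : (∑' i:ℕ, ((1:ℝ)/2)^(i+1)) = ((1:ℝ)/2) * ∑' i:ℕ, ((1:ℝ)/2)^i := by
        rw [← tsum_mul_left]
        exact tsum_congr (fun i => by rw [pow_succ]; ring)
      rw [h4, tsum_geometric_of_lt_one (by norm_num) (by norm_num)]
      norm_num
    rw [this, mul_one]
  rw [← hsplit, h1, zero_add] at hle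
  calc shiftDist x y ≤ _ := hle
  _ = ((1:ℝ)/2)^L := h2

lemma pow_le_shiftDist {x y : ℕ → Fin k} {j : ℕ} (h : x j ≠ y j) :
    ((1:ℝ)/2)^(j+1) ≤ shiftDist x y := by
  have h0 := Summable.le_tsum (summable_sd x y) j (fun i _ => by split <;> positivity)
  rw [if_neg h] at h0
  exact h0

lemma agree_of_dist_lt {x y : ℕ → Fin k} {L : ℕ} (h : shiftDist x y < ((1:ℝ)/2)^L) :
    ∀ i, i < L → x i = y i := by
  intro i hi
  by_contra hne
  have h1 := pow_le_shiftDist hne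
  have h2 : ((1:ℝ)/2)^L ≤ ((1:ℝ)/2)^(i+1) :=
    pow_le_pow_of_le_one (by norm_num) (by norm_num) (by omega)
  linarith

lemma shift_iter (n : ℕ) : ∀ (x : ℕ → Fin k) (i : ℕ), (shift^[n] x) i = x (i + n) := by
  induction n with
  | zero => intro x i; simp
  | succ n ih =>
    intro x i
    rw [Function.iterate_succ_apply, ih (shift x) i]
    show x ((i+n)+1) = x (i+(n+1))
    congr 1

end Metric


section Recurrence

variable {k m : ℕ} (w fil : ℕ → Fin k)

lemma MM_pos (hm : 1 ≤ m) (t : ℕ) : 0 < MM m t :=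
  lt_of_lt_of_le (by have := UU_pos hm t; omega : 0 < 100 * UU m t) (hundred_UU_le_MM t)

lemma MM_mono (hm : 1 ≤ m) {s t : ℕ} (h : s ≤ t) : MM m s ≤ MM m t := by
  have h1 := MM_eq (m := m) s
  have h2 := MM_eq (m := m) t
  have := UU_mono (m := m) h
  have := gg_mono hm h
  omega

lemma recurrent_YY (hm : 1 ≤ m) : Recurrent (YY m w fil) := by
  intro ε hε
  obtain ⟨j, hj⟩ := exists_pow_lt_of_lt_one hε (by norm_num : (1:ℝ)/2 < 1)
  refine ⟨MM m j, MM_pos hm j, ?_⟩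
  show shiftDist (YY m w fil) (shift^[MM m j] (YY m w fil)) < ε
  have hagree : ∀ i, i < UU m j → YY m w fil i = (shift^[MM m j] (YY m w fil)) i := by
    intro i hi
    rw [shift_iter]
    rw [show i + MM m j = UU m j + gg m j + i by rw [MM_eq]; ring]
    exact (YY_shift w fil hm hi).symm
  calc shiftDist (YY m w fil) (shift^[MM m j] (YY m w fil)) ≤ ((1:ℝ)/2)^(UU m j) :=
        shiftDist_le_pow hagree
  _ ≤ ((1:ℝ)/2)^j := pow_le_pow_of_le_one (by norm_num) (by norm_num) (le_of_lt (self_lt_UU hm j))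
  _ < ε := hj

/-- The sparse set of allowed return times. -/
def QQ (m : ℕ) : Set ℕ := {q | ∃ F : Finset ℕ, (∀ s ∈ F, 1 ≤ s) ∧ q = fsum m F}

lemma visits_sub (hm : 1 ≤ m) {z o : Fin k} (hzo : z ≠ o) (hw : w (m-1) = o) (hf0 : fil 0 = z) :
    visits (YY m w fil) (sball (YY m w fil) (((1:ℝ)/2)^(UU m 1))) ⊆ QQ m := by
  rintro n ⟨hn1, hball⟩
  have hUone : UU m 1 = 128 * m := UU_one
  have hgg0 : gg m 0 = 126 * m := gg_zero
  have hMM0 : MM m 0 = 127 * m := MM_zero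
  have hag : ∀ i, i < UU m 1 → YY m w fil i = YY m w fil (n + i) := by
    intro i hi
    have := agree_of_dist_lt hball i hi
    rw [shift_iter] at this
    rw [this]
    congr 1
    ring
  have hA : YY m w fil (n + (m-1)) = o := by
    rw [← hag (m-1) (by omega)]
    rw [YY_base w fil hm (by omega)]
    exact hw
  have hB : ∀ j, j < gg m 0 → YY m w fil (n + m + j) = z := by
    intro j hj
    have h1 := hag (m + j) (by omega)
    rw [show n + m + j = n + (m + j) by ring, ← h1]
    have h2 : (m : ℕ) + j = UU m 0 + j := by rw [UU_zero]
    rw [h2, YY_filler w fil hm hj]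
    exact hf0
  have hC : YY m w fil (n + MM m 0 + (m-1)) = o := by
    have h1 := hag (MM m 0 + (m-1)) (by omega)
    rw [show n + MM m 0 + (m-1) = n + (MM m 0 + (m-1)) by ring, ← h1]
    have hsub : ({0} : Finset ℕ) ⊆ Finset.range 1 := by simp
    have h2 := YY_copy w fil hm 1 {0} hsub (m-1) (by omega)
    have h3 : fsum m {0} = MM m 0 := by simp [fsum]
    rw [h3] at h2
    rw [h2, hw]
  exact backward w fil hm hzo hw hf0 n hA hB hC

lemma sep_aux (hm : 1 ≤ m) {n j : ℕ} {A B : Finset ℕ} (hjA : j ∈ A) (hjB : j ∉ B)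
    (hup : ∀ s, j < s → (s ∈ A ↔ s ∈ B)) (hjn : n ≤ j) :
    fsum m B + gg m n ≤ fsum m A := by
  classical
  set hi := A.filter (fun s => j < s) with hhi
  have h1 : insert j hi ⊆ A := by
    intro x hx
    rcases Finset.mem_insert.1 hx with rfl | hx
    · exact hjA
    · exact Finset.mem_of_mem_filter _ hx
  have hjhi : j ∉ hi := by simp [hhi]
  have h2 : MM m j + fsum m hi ≤ fsum m A := by
    rw [← fsum_insert hjhi]
    exact Finset.sum_le_sum_of_subset h1
  have h3 : fsum m B = fsum m (B.filter (fun s => j < s)) + fsum m (B.filter (fun s => ¬ j < s)) :=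
    (Finset.sum_filter_add_sum_filter_not _ _ _).symm
  have h4 : B.filter (fun s => j < s) = hi := by
    ext s
    simp only [Finset.mem_filter, hhi]
    constructor
    · rintro ⟨hs, hjs⟩; exact ⟨(hup s hjs).2 hs, hjs⟩
    · rintro ⟨hs, hjs⟩; exact ⟨(hup s hjs).1 hs, hjs⟩
  rw [h4] at h3
  have h5 : B.filter (fun s => ¬ j < s) ⊆ Finset.range j := by
    intro s hs
    have h6 := Finset.mem_filter.1 hs
    have : s ≠ j := fun hc => hjB (hc ▸ h6.1)
    exact Finset.mem_range.2 (by omega)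
  have h7 := fsum_le (m := m) h5
  have h8 := MM_eq (m := m) j
  have h9 := gg_mono hm hjn
  omega

lemma sep (hm : 1 ≤ m) {n : ℕ} {A B : Finset ℕ} (hA : ∀ s ∈ A, n ≤ s) (hB : ∀ s ∈ B, n ≤ s)
    (hne : A ≠ B) :
    fsum m A + gg m n ≤ fsum m B ∨ fsum m B + gg m n ≤ fsum m A := by
  classical
  set D := (A \ B) ∪ (B \ A) with hD
  have hDne : D.Nonempty := by
    rw [Finset.nonempty_iff_ne_empty]
    intro h
    apply hne
    have h1 : A \ B = ∅ := by
      apply Finset.eq_empty_of_forall_notMem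
      intro x hx
      have : x ∈ D := Finset.mem_union.2 (Or.inl hx)
      rw [h] at this; exact absurd this (Finset.notMem_empty x)
    have h2 : B \ A = ∅ := by
      apply Finset.eq_empty_of_forall_notMem
      intro x hx
      have : x ∈ D := Finset.mem_union.2 (Or.inr hx)
      rw [h] at this; exact absurd this (Finset.notMem_empty x)
    apply Finset.Subset.antisymm
    · intro x hx
      by_contra hc
      have : x ∈ A \ B := Finset.mem_sdiff.2 ⟨hx, hc⟩
      rw [h1] at this; exact absurd this (Finset.notMem_empty x)
    · intro x hx
      by_contra hc
      have : x ∈ B \ A := Finset.mem_sdiff.2 ⟨hx, hc⟩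
      rw [h2] at this; exact absurd this (Finset.notMem_empty x)
  set j := D.max' hDne with hj
  have hjD : j ∈ D := Finset.max'_mem _ _
  have hmax : ∀ s ∈ D, s ≤ j := fun s hs => Finset.le_max' _ _ hs
  have hup : ∀ s, j < s → (s ∈ A ↔ s ∈ B) := by
    intro s hs
    constructor
    · intro hsA
      by_contra hc
      have : s ∈ D := Finset.mem_union.2 (Or.inl (Finset.mem_sdiff.2 ⟨hsA, hc⟩))
      have := hmax s this; omega
    · intro hsB
      by_contra hc
      have : s ∈ D := Finset.mem_union.2 (Or.inr (Finset.mem_sdiff.2 ⟨hsB, hc⟩))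
      have := hmax s this; omega
  rcases Finset.mem_union.1 hjD with hjd | hjd
  · have h1 := Finset.mem_sdiff.1 hjd
    exact Or.inr (sep_aux hm h1.1 h1.2 hup (hA j h1.1))
  · have h1 := Finset.mem_sdiff.1 hjd
    exact Or.inl (sep_aux hm h1.1 h1.2 (fun s hs => (hup s hs).symm) (hB j h1.1))

end Recurrence


section Counting

variable {k m : ℕ} (w fil : ℕ → Fin k)

lemma cnt (hm : 1 ≤ m) {n N b : ℕ} (hn : 1 ≤ n) (hN : N ≤ MM m n) :
    (QQ m ∩ Set.Ico b (b+N)).ncard ≤ 2^(n+1) := by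
  classical
  set p : ℕ → Prop := fun q => ∃ F : Finset ℕ, (∀ s ∈ F, 1 ≤ s) ∧ q = fsum m F with hp
  set T : Finset ℕ := (Finset.Ico b (b+N)).filter p with hT
  have hset : QQ m ∩ Set.Ico b (b+N) = ↑T := by
    ext q
    simp only [QQ, Set.mem_inter_iff, Set.mem_setOf_eq, Set.mem_Ico, hT, Finset.coe_filter,
      Finset.mem_Ico, Set.mem_setOf_eq, hp]
    tauto
  rw [hset, Set.ncard_coe_finset]
  set φ : ℕ → Finset ℕ × Bool := fun q =>
    if h : p q then (h.choose.filter (fun s => s < n),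
      decide (2 * fsum m (h.choose.filter (fun s => ¬ s < n)) ≤ 2*b + N))
    else (∅, true) with hφ
  have hcard2 : ((Finset.range n).powerset ×ˢ (Finset.univ : Finset Bool)).card = 2^(n+1) := by
    rw [Finset.card_product, Finset.card_powerset, Finset.card_range]
    simp [pow_succ]
  rw [← hcard2]
  apply Finset.card_le_card_of_injOn φ
  · intro q hq
    have hpq : p q := (Finset.mem_filter.1 hq).2
    rw [hφ]; simp only [dif_pos hpq]
    refine Finset.mem_product.2 ⟨Finset.mem_powerset.2 ?_, Finset.mem_univ _⟩
    intro s hs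
    exact Finset.mem_range.2 (Finset.mem_filter.1 hs).2
  · intro q hq q' hq' heq
    rw [Finset.mem_coe] at hq hq'
    have hpq : p q := (Finset.mem_filter.1 hq).2
    have hpq' : p q' := (Finset.mem_filter.1 hq').2
    have hIq := Finset.mem_Ico.1 (Finset.mem_filter.1 hq).1
    have hIq' := Finset.mem_Ico.1 (Finset.mem_filter.1 hq').1
    rw [hφ] at heq
    simp only [dif_pos hpq, dif_pos hpq', Prod.mk.injEq] at heq
    obtain ⟨hlow, hbool⟩ := heq
    have hq2 : q = fsum m (hpq.choose.filter (fun s => s < n)) +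
        fsum m (hpq.choose.filter (fun s => ¬ s < n)) := by
      conv_lhs => rw [hpq.choose_spec.2]
      exact (Finset.sum_filter_add_sum_filter_not _ _ _).symm
    have hq2' : q' = fsum m (hpq'.choose.filter (fun s => s < n)) +
        fsum m (hpq'.choose.filter (fun s => ¬ s < n)) := by
      conv_lhs => rw [hpq'.choose_spec.2]
      exact (Finset.sum_filter_add_sum_filter_not _ _ _).symm
    have hloweq : fsum m (hpq.choose.filter (fun s => s < n)) =
        fsum m (hpq'.choose.filter (fun s => s < n)) := by
      rw [hlow]
    have hlowle : fsum m (hpq.choose.filter (fun s => s < n)) + m ≤ UU m n := by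
      apply fsum_le
      intro s hs
      exact Finset.mem_range.2 (Finset.mem_filter.1 hs).2
    by_cases hAB : hpq.choose.filter (fun s => ¬ s < n) = hpq'.choose.filter (fun s => ¬ s < n)
    · have : fsum m (hpq.choose.filter (fun s => ¬ s < n)) =
          fsum m (hpq'.choose.filter (fun s => ¬ s < n)) := by rw [hAB]
      omega
    · have hsep := sep hm (n := n) (A := hpq.choose.filter (fun s => ¬ s < n))
        (B := hpq'.choose.filter (fun s => ¬ s < n))
        (fun s hs => by have := (Finset.mem_filter.1 hs).2; omega)
        (fun s hs => by have := (Finset.mem_filter.1 hs).2; omega) hAB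
      have hiff := decide_eq_decide.1 hbool
      have h100 := hundred_UU_le_MM (m := m) n
      have hUpos := UU_pos hm n
      have hMMeq := MM_eq (m := m) n
      omega

lemma banach_zero (hm : 1 ≤ m) {V : Set ℕ} (hV : V ⊆ QQ m) : banachUpperDensity V ≤ 0 := by
  have key : ∀ j N : ℕ, MM m j < N →
      (⨆ a : ℕ, ((V ∩ Set.Ico a (a + N)).ncard : ℝ) / N) ≤ ((1:ℝ)/4)^j := by
    intro j N hMN
    have hex : ∃ n, N ≤ MM m n := by
      refine ⟨N, ?_⟩
      have h1 := pow8_le_UU hm N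
      have h2 := hundred_UU_le_MM (m := m) N
      have h3 := Nat.lt_pow_self (n := N) (show 1 < 8 by norm_num)
      omega
    have hNle : N ≤ MM m (Nat.find hex) := Nat.find_spec hex
    set n := Nat.find hex with hn
    have hjn : j < n := by
      by_contra hc
      push_neg at hc
      have := MM_mono hm hc
      omega
    have hn1 : 1 ≤ n := by omega
    have hNge : 8^(n+1) ≤ N := by
      have hmin : ¬ (N ≤ MM m (n-1)) := Nat.find_min hex (by omega)
      push_neg at hmin
      have h1 : 100 * UU m (n-1) ≤ MM m (n-1) := hundred_UU_le_MM _
      have h2 : 8^(n-1) ≤ UU m (n-1) := pow8_le_UU hm _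
      have h3 : 8^(n+1) = 64 * 8^(n-1) := by
        rw [show n+1 = (n-1)+2 by omega, pow_add]
        ring
      omega
    apply ciSup_le
    intro a
    have hsub : V ∩ Set.Ico a (a+N) ⊆ QQ m ∩ Set.Ico a (a+N) :=
      Set.inter_subset_inter_left _ hV
    have hfin : (QQ m ∩ Set.Ico a (a+N)).Finite :=
      (Set.finite_Ico a (a+N)).subset Set.inter_subset_right
    have hcard : (V ∩ Set.Ico a (a+N)).ncard ≤ 2^(n+1) :=
      le_trans (Set.ncard_le_ncard hsub hfin) (cnt hm hn1 hNle)
    have hdiv : ((V ∩ Set.Ico a (a+N)).ncard : ℝ)/N ≤ (2^(n+1) : ℝ)/(8^(n+1)) := by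
      apply div_le_div₀ (by positivity) (by exact_mod_cast hcard) (by positivity)
        (by exact_mod_cast hNge)
    calc ((V ∩ Set.Ico a (a+N)).ncard : ℝ)/N ≤ (2^(n+1):ℝ)/8^(n+1) := hdiv
    _ = ((1:ℝ)/4)^(n+1) := by
        rw [← div_pow]
        norm_num
    _ ≤ ((1:ℝ)/4)^j := pow_le_pow_of_le_one (by norm_num) (by norm_num) (by omega)
  have hbdd : ∀ j : ℕ,
      Filter.limsup (fun N => ⨆ a : ℕ, ((V ∩ Set.Ico a (a + N)).ncard : ℝ) / N) Filter.atTop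
        ≤ ((1:ℝ)/4)^j := by
    intro j
    apply Filter.limsup_le_of_le
    · have h0 : ∀ N : ℕ, 0 ≤ (⨆ a : ℕ, ((V ∩ Set.Ico a (a + N)).ncard : ℝ) / N) :=
        fun N => Real.iSup_nonneg (fun a => by positivity)
      apply Filter.IsBoundedUnder.isCoboundedUnder_le
      exact ⟨0, Filter.eventually_map.mpr (Filter.Eventually.of_forall h0)⟩
    · filter_upwards [Filter.eventually_gt_atTop (MM m j)] with N hN
      exact key j N hN
  rw [banachUpperDensity]
  exact ge_of_tendsto'
    (tendsto_pow_atTop_nhds_zero_of_lt_one (by norm_num : (0:ℝ) ≤ 1/4) (by norm_num)) hbdd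

lemma notBR (hm : 1 ≤ m) {z o : Fin k} (hzo : z ≠ o) (hw : w (m-1) = o) (hf0 : fil 0 = z) :
    ¬ BanachRecurrent (YY m w fil) := by
  intro h
  have h1 := h (((1:ℝ)/2)^(UU m 1)) (by positivity)
  have h2 := banach_zero hm (visits_sub w fil hm hzo hw hf0)
  linarith

end Counting


section DC1Helpers

variable {k m : ℕ}

lemma ncard_filter (n : ℕ) (p : ℕ → Prop) [DecidablePred p] :
    ({i | i < n ∧ p i}).ncard = ((Finset.range n).filter p).card := by
  rw [← Set.ncard_coe_finset]
  congr 1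
  ext i
  simp [Finset.mem_filter, and_comm]

lemma PhiN_nonneg {x y : ℕ → Fin k} {n : ℕ} {t : ℝ} : 0 ≤ PhiN x y n t := by
  rw [PhiN]
  positivity

lemma PhiN_le_one {x y : ℕ → Fin k} {n : ℕ} {t : ℝ} : PhiN x y n t ≤ 1 := by
  classical
  rcases Nat.eq_zero_or_pos n with hn | hn
  · subst hn
    simp [PhiN]
  · rw [PhiN, ncard_filter]
    rw [div_le_one (by exact_mod_cast hn)]
    have := Finset.card_filter_le (Finset.range n)
      (fun i => shiftDist (shift^[i] x) (shift^[i] y) < t)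
    exact_mod_cast le_trans this (le_of_eq (Finset.card_range n))

lemma diffcount (w fil fil' : ℕ → Fin k) (hm : 1 ≤ m) :
    ∀ d t0 : ℕ, (∀ s, t0 ≤ s → s < t0 + d → fil s = fil' s) →
      ((Finset.range (UU m (t0 + d))).filter
        (fun i => YY m w fil i ≠ YY m w fil' i)).card ≤ 2^d * UU m t0 := by
  classical
  intro d
  induction d with
  | zero =>
    intro t0 _
    simpa using le_trans (Finset.card_filter_le _ _) (le_of_eq (Finset.card_range _))
  | succ d ih =>
    intro t0 hyp
    set T := t0 + d with hT
    have hTsucc : t0 + (d+1) = T + 1 := by omega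
    rw [hTsucc]
    have hsplitU := UU_succ_split m T
    have hU1 : Finset.range (UU m (T+1)) =
        Finset.Ico 0 (UU m T) ∪ Finset.Ico (UU m T) (UU m T + gg m T)
          ∪ Finset.Ico (UU m T + gg m T) (UU m (T+1)) := by
      rw [Finset.Ico_union_Ico_eq_Ico (by omega) (by omega),
        Finset.Ico_union_Ico_eq_Ico (by omega) (by omega), Finset.range_eq_Ico]
    set P : ℕ → Prop := fun i => YY m w fil i ≠ YY m w fil' i with hP
    have hmid : ((Finset.Ico (UU m T) (UU m T + gg m T)).filter P).card = 0 := by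
      rw [Finset.card_eq_zero, Finset.filter_eq_empty_iff]
      intro i hi
      have hi' := Finset.mem_Ico.1 hi
      have : i = UU m T + (i - UU m T) := by omega
      rw [hP]
      simp only [not_not]
      rw [this, YY_filler w fil hm (by omega), YY_filler w fil' hm (by omega)]
      exact hyp T (by omega) (by omega)
    have hthird : ((Finset.Ico (UU m T + gg m T) (UU m (T+1))).filter P).card ≤
        ((Finset.range (UU m T)).filter P).card := by
      apply Finset.card_le_card_of_injOn (fun i => i - (UU m T + gg m T))
      · intro i hi
        have h1 := Finset.mem_filter.1 hi
        have h2 := Finset.mem_Ico.1 h1.1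
        refine Finset.mem_filter.2 ⟨Finset.mem_range.2 (show i - (UU m T + gg m T) < UU m T by omega), ?_⟩
        have he : i = UU m T + gg m T + (i - (UU m T + gg m T)) := by omega
        have hlt : i - (UU m T + gg m T) < UU m T := by omega
        have e1 := YY_shift w fil hm hlt
        have e2 := YY_shift w fil' hm hlt
        rw [hP]
        intro hc
        apply h1.2
        calc YY m w fil i = YY m w fil (UU m T + gg m T + (i - (UU m T + gg m T))) := by rw [← he]
        _ = YY m w fil (i - (UU m T + gg m T)) := e1
        _ = YY m w fil' (i - (UU m T + gg m T)) := hc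
        _ = YY m w fil' (UU m T + gg m T + (i - (UU m T + gg m T))) := e2.symm
        _ = YY m w fil' i := by rw [← he]
      · intro i hi j hj hij
        have h1 := Finset.mem_Ico.1 (Finset.mem_filter.1 (Finset.mem_coe.1 hi)).1
        have h2 := Finset.mem_Ico.1 (Finset.mem_filter.1 (Finset.mem_coe.1 hj)).1
        have hij' : i - (UU m T + gg m T) = j - (UU m T + gg m T) := hij
        omega
    have hfirst : ((Finset.Ico 0 (UU m T)).filter P).card ≤ 2^d * UU m t0 := by
      rw [← Finset.range_eq_Ico]
      exact ih t0 (fun s h1 h2 => hyp s h1 (by omega))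
    have hIH2 : ((Finset.range (UU m T)).filter P).card ≤ 2^d * UU m t0 :=
      ih t0 (fun s h1 h2 => hyp s h1 (by omega))
    calc ((Finset.range (UU m (T+1))).filter P).card
        = ((Finset.Ico 0 (UU m T) ∪ Finset.Ico (UU m T) (UU m T + gg m T)
            ∪ Finset.Ico (UU m T + gg m T) (UU m (T+1))).filter P).card := by rw [hU1]
    _ ≤ (((Finset.Ico 0 (UU m T) ∪ Finset.Ico (UU m T) (UU m T + gg m T)).filter P).card
          + ((Finset.Ico (UU m T + gg m T) (UU m (T+1))).filter P).card) := by
        rw [Finset.filter_union]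
        exact Finset.card_union_le _ _
    _ ≤ ((Finset.Ico 0 (UU m T)).filter P).card
          + ((Finset.Ico (UU m T) (UU m T + gg m T)).filter P).card
          + ((Finset.Ico (UU m T + gg m T) (UU m (T+1))).filter P).card := by
        rw [Finset.filter_union]
        have := Finset.card_union_le ((Finset.Ico 0 (UU m T)).filter P)
          ((Finset.Ico (UU m T) (UU m T + gg m T)).filter P)
        omega
    _ ≤ 2^d * UU m t0 + 0 + 2^d * UU m t0 := by
        have := hmid
        omega
    _ = 2^(d+1) * UU m t0 := by ring

end DC1Helpers


section Family

variable {k : ℕ}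

/-- The symbol `0`. -/
def sym0 (hk : 2 ≤ k) : Fin k := ⟨0, lt_of_lt_of_le (by norm_num) hk⟩
/-- The symbol `1`. -/
def sym1 (hk : 2 ≤ k) : Fin k := ⟨1, lt_of_lt_of_le (by norm_num) hk⟩

lemma sym_ne (hk : 2 ≤ k) : sym0 hk ≠ sym1 hk := by
  simp [sym0, sym1, Fin.ext_iff]

/-- Level fillers encoding a boolean sequence `c`. -/
def fillC (hk : 2 ≤ k) (c : ℕ → Bool) (t : ℕ) : Fin k :=
  if (Nat.log 2 (t+1)) % 2 = 1 then
    (if c (Nat.unpair ((Nat.log 2 (t+1) - 1)/2)).1 then sym1 hk else sym0 hk)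
  else sym0 hk

lemma fillC_zero (hk : 2 ≤ k) (c : ℕ → Bool) : fillC hk c 0 = sym0 hk := by
  simp [fillC, Nat.log_one_right]

lemma fillC_even (hk : 2 ≤ k) (c : ℕ → Bool) {t p : ℕ}
    (h1 : 2^(2*p) ≤ t+1) (h2 : t+1 < 2^(2*p+1)) : fillC hk c t = sym0 hk := by
  have hlog : Nat.log 2 (t+1) = 2*p := Nat.log_eq_of_pow_le_of_lt_pow h1 h2
  rw [fillC, hlog]
  simp [Nat.mul_mod_right]

lemma fillC_odd (hk : 2 ≤ k) (c : ℕ → Bool) (l : ℕ) :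
    fillC hk c (2^(2*l+1) - 1) = (if c (Nat.unpair l).1 then sym1 hk else sym0 hk) := by
  have hpow : 0 < 2^(2*l+1) := Nat.pow_pos (by norm_num)
  have ht : (2^(2*l+1) - 1) + 1 = 2^(2*l+1) := by omega
  rw [fillC, ht, Nat.log_pow (by norm_num)]
  have : (2*l+1) % 2 = 1 := by omega
  rw [if_pos this]
  have : (2*l+1-1)/2 = l := by omega
  rw [this]

/-- The DC1 family member for parameter `c`. -/
noncomputable def Yc (hk : 2 ≤ k) (c : ℕ → Bool) : ℕ → Fin k :=
  YY 1 (fun _ => sym1 hk) (fillC hk c)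

lemma Yc_recurrent (hk : 2 ≤ k) (c : ℕ → Bool) : Recurrent (Yc hk c) :=
  recurrent_YY _ _ (le_refl 1)

lemma Yc_notBR (hk : 2 ≤ k) (c : ℕ → Bool) : ¬ BanachRecurrent (Yc hk c) :=
  notBR _ _ (le_refl 1) (sym_ne hk) rfl (fillC_zero hk c)

lemma fillC_diff (hk : 2 ≤ k) {c c' : ℕ → Bool} {j : ℕ} (hj : c j ≠ c' j) (l : ℕ) :
    fillC hk c (2^(2*(Nat.pair j l)+1) - 1) ≠ fillC hk c' (2^(2*(Nat.pair j l)+1) - 1) := by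
  rw [fillC_odd, fillC_odd, Nat.unpair_pair]
  cases hc : c j <;> cases hc' : c' j <;> simp_all
  · exact fun h => sym_ne hk h
  · exact fun h => sym_ne hk h.symm

/-- bad levels are unbounded -/
lemma bad_levels (hk : 2 ≤ k) {c c' : ℕ → Bool} (hcc : c ≠ c') :
    ∀ R : ℕ, ∃ t, R ≤ t ∧ fillC hk c t ≠ fillC hk c' t := by
  intro R
  obtain ⟨j, hj⟩ : ∃ j, c j ≠ c' j := by
    by_contra h
    push_neg at h
    exact hcc (funext h)
  refine ⟨2^(2*(Nat.pair j R)+1) - 1, ?_, fillC_diff hk hj R⟩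
  have h1 : R ≤ Nat.pair j R := Nat.right_le_pair _ _
  have h2 : 2*(Nat.pair j R)+1 < 2^(2*(Nat.pair j R)+1) := Nat.lt_pow_self (by norm_num)
  omega

end Family


section PairLiminf

variable {k : ℕ}

lemma MM_ge_lin {m : ℕ} (t : ℕ) : (t+1) * UU m t ≤ MM m t := by
  have h8 : (t+2) ≤ 8^(t+2) := le_of_lt (Nat.lt_pow_self (by norm_num))
  have h1 : (t+2) * (t+2) ≤ (t+2) * 8^(t+2) := Nat.mul_le_mul_left _ h8
  have h2 : t + 2 ≤ (t+2) * (t+2) := Nat.le_mul_of_pos_left _ (by omega)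
  have h3 : t + 1 ≤ (t+2) * 8^(t+2) - 1 := by omega
  exact Nat.mul_le_mul_right _ h3

lemma pair_liminf (hk : 2 ≤ k) {c c' : ℕ → Bool} (hcc : c ≠ c') :
    Filter.liminf (fun n => PhiN (Yc hk c) (Yc hk c') n (1/4)) Filter.atTop = 0 := by
  classical
  have hbound : ∀ t, fillC hk c t ≠ fillC hk c' t →
      PhiN (Yc hk c) (Yc hk c') (MM 1 t) (1/4) ≤ 1/(t+1 : ℝ) := by
    intro t hdiff
    have hMM := MM_eq (m := 1) t
    have hsub : {i | i < MM 1 t ∧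
        shiftDist (shift^[i] (Yc hk c)) (shift^[i] (Yc hk c')) < 1/4} ⊆ Set.Iio (UU 1 t) := by
      rintro i ⟨hi1, hi2⟩
      by_contra hge
      simp only [Set.mem_Iio, not_lt] at hge
      have hj : i - UU 1 t < gg 1 t := by omega
      have he : i = UU 1 t + (i - UU 1 t) := by omega
      have e1 : Yc hk c i = fillC hk c t := by
        conv_lhs => rw [he]
        exact YY_filler _ _ (le_refl 1) hj
      have e2 : Yc hk c' i = fillC hk c' t := by
        conv_lhs => rw [he]
        exact YY_filler _ _ (le_refl 1) hj
      have hne : (shift^[i] (Yc hk c)) 0 ≠ (shift^[i] (Yc hk c')) 0 := by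
        rw [shift_iter i (Yc hk c) 0, shift_iter i (Yc hk c') 0]
        simp only [Nat.zero_add]
        rw [e1, e2]
        exact hdiff
      have hdist := pow_le_shiftDist hne
      norm_num at hdist
      linarith
    have hIio : (Set.Iio (UU 1 t)).ncard = UU 1 t := by
      rw [← Finset.coe_range, Set.ncard_coe_finset, Finset.card_range]
    have hcard : ({i | i < MM 1 t ∧
        shiftDist (shift^[i] (Yc hk c)) (shift^[i] (Yc hk c')) < 1/4}).ncard ≤ UU 1 t := by
      have := Set.ncard_le_ncard hsub (Set.finite_Iio _)
      omega
    have hlin : (t+1) * UU 1 t ≤ MM 1 t := MM_ge_lin t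
    have hU : (0:ℝ) < UU 1 t := by exact_mod_cast UU_pos (le_refl 1) t
    have hMMpos : (0:ℝ) < MM 1 t := by exact_mod_cast MM_pos (le_refl 1) t
    rw [PhiN]
    calc (({i | i < MM 1 t ∧
            shiftDist (shift^[i] (Yc hk c)) (shift^[i] (Yc hk c')) < 1/4}).ncard : ℝ) / (MM 1 t)
        ≤ (UU 1 t : ℝ)/(MM 1 t) :=
          div_le_div₀ hU.le (by exact_mod_cast hcard) hMMpos (le_refl _)
    _ ≤ (UU 1 t : ℝ)/((t+1) * UU 1 t) := by
          apply div_le_div_of_nonneg_left hU.le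
          · positivity
          · exact_mod_cast hlin
    _ = 1/(t+1 : ℝ) := by
          rw [div_eq_div_iff (by positivity) (by positivity)]
          ring
  apply le_antisymm
  · apply le_of_forall_pos_le_add
    intro ε hε
    rw [zero_add]
    apply Filter.liminf_le_of_frequently_le ?_ ?_
    · rw [Filter.frequently_atTop]
      intro a
      obtain ⟨T₀, hT₀⟩ := exists_nat_gt (1/ε)
      obtain ⟨t, hta, hdiff⟩ := bad_levels hk hcc (max a T₀)
      refine ⟨MM 1 t, ?_, ?_⟩
      · have h1 := pow8_le_UU (le_refl 1) t
        have h2 := Nat.lt_pow_self (n := t) (show 1 < 8 by norm_num)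
        have h3 := MM_eq (m := 1) t
        have h4 : max a T₀ ≤ t := hta
        have h5 : a ≤ max a T₀ := le_max_left _ _
        omega
      · calc PhiN (Yc hk c) (Yc hk c') (MM 1 t) (1/4) ≤ 1/(t+1:ℝ) := hbound t hdiff
        _ ≤ ε := by
            have h4 : (T₀ : ℝ) ≤ (t:ℝ)+1 := by
              have : T₀ ≤ t := le_trans (le_max_right _ _) hta
              have := Nat.cast_le (α := ℝ).2 this
              linarith
            have h5 : 1/ε < (t:ℝ)+1 := lt_of_lt_of_le hT₀ h4
            rw [div_le_iff₀ (by positivity)]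
            have h6 := (div_lt_iff₀ hε).1 h5
            nlinarith
    · exact ⟨0, Filter.eventually_map.mpr (Filter.Eventually.of_forall (fun n => PhiN_nonneg))⟩
  · apply Filter.le_liminf_of_le
    · apply Filter.IsBoundedUnder.isCoboundedUnder_ge
      exact ⟨1, Filter.eventually_map.mpr (Filter.Eventually.of_forall (fun n => PhiN_le_one))⟩
    · exact Filter.Eventually.of_forall (fun n => PhiN_nonneg)

end PairLiminf


section PairLimsup

variable {k : ℕ}

lemma UU_growth {m : ℕ} (a : ℕ) : ∀ d, UU m a * 64^d ≤ UU m (a + d) := by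
  intro d
  induction d with
  | zero => simp
  | succ d ih =>
    have hco := coeff_ge (a + d)
    have h1 : UU m (a + (d+1)) = ((a+d)+2) * 8^((a+d)+2) * UU m (a+d) := by
      rw [show a + (d+1) = (a+d)+1 by ring]
      rfl
    have h2 : 64 * (UU m a * 64^d) ≤ 64 * UU m (a+d) := Nat.mul_le_mul_left _ ih
    have h3 : 64 * UU m (a+d) ≤ ((a+d)+2) * 8^((a+d)+2) * UU m (a+d) :=
      Nat.mul_le_mul_right _ (by omega)
    calc UU m a * 64^(d+1) = 64 * (UU m a * 64^d) := by ring
    _ ≤ ((a+d)+2) * 8^((a+d)+2) * UU m (a+d) := le_trans h2 h3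
    _ = UU m (a + (d+1)) := h1.symm

lemma pair_limsup (hk : 2 ≤ k) (c c' : ℕ → Bool) {τ : ℝ} (hτ : 0 < τ) :
    Filter.limsup (fun n => PhiN (Yc hk c) (Yc hk c') n τ) Filter.atTop = 1 := by
  classical
  obtain ⟨r, hr⟩ := exists_pow_lt_of_lt_one hτ (by norm_num : (1:ℝ)/2 < 1)
  have hfreq : ∀ δ : ℝ, 0 < δ → ∀ R : ℕ, ∃ n, R ≤ n ∧ 1 - δ ≤ PhiN (Yc hk c) (Yc hk c') n τ := by
    intro δ hδ R
    obtain ⟨a1, ha1⟩ := pow_unbounded_of_one_lt (R := ℝ) ((2*r + 2*r*r)/δ) (by norm_num : (1:ℝ) < 32)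
    set p := max a1 R with hp
    set t0 := 2^(2*p) - 1 with ht0
    set e := (2:ℕ)^(2*p) with he
    set tstar := 2^(2*p+1) - 2 with htstar
    have hpow : (2:ℕ)^(2*p+1) = 2 * 2^(2*p) := by rw [pow_succ]; ring
    have hepos : 1 ≤ e := Nat.one_le_two_pow
    have hte : t0 + e = tstar + 1 := by omega
    have hagree_fill : ∀ s, t0 ≤ s → s < t0 + e → fillC hk c s = fillC hk c' s := by
      intro s h1 h2
      have hl : 2^(2*p) ≤ s+1 := by omega
      have hu : s+1 < 2^(2*p+1) := by omega
      rw [fillC_even hk c hl hu, fillC_even hk c' hl hu]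
    have hD := diffcount (fun _ => sym1 hk) (fillC hk c) (fillC hk c') (le_refl 1) e t0 hagree_fill
    rw [hte] at hD
    set n := UU 1 (tstar + 1) with hn
    set Pg : ℕ → Prop := fun i => ∀ q, q < r → Yc hk c (i+q) = Yc hk c' (i+q) with hPg
    set D2 : Finset ℕ := (Finset.range (n + r)).filter (fun i => Yc hk c i ≠ Yc hk c' i) with hD2
    have hD2card : D2.card ≤ 2^e * UU 1 t0 + r := by
      have hsplit : Finset.range (n + r) = Finset.range n ∪ Finset.Ico n (n + r) := by
        rw [Finset.range_eq_Ico, Finset.range_eq_Ico, Finset.Ico_union_Ico_eq_Ico (by omega) (by omega)]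
      rw [hD2, hsplit, Finset.filter_union]
      calc _ ≤ ((Finset.range n).filter (fun i => Yc hk c i ≠ Yc hk c' i)).card
              + ((Finset.Ico n (n + r)).filter (fun i => Yc hk c i ≠ Yc hk c' i)).card :=
            Finset.card_union_le _ _
      _ ≤ 2^e * UU 1 t0 + r := by
          have h1 : ((Finset.range n).filter (fun i => Yc hk c i ≠ Yc hk c' i)).card
              ≤ 2^e * UU 1 t0 := hD
          have h2 : ((Finset.Ico n (n + r)).filter (fun i => Yc hk c i ≠ Yc hk c' i)).card ≤ r := by
            calc _ ≤ (Finset.Ico n (n + r)).card := Finset.card_filter_le _ _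
            _ = r := by rw [Nat.card_Ico]; omega
          omega
    set B : Finset ℕ := (Finset.range n).filter (fun i => ¬ Pg i) with hB
    have hBsub : B ⊆ D2.biUnion (fun dd => Finset.Ico (dd + 1 - r) (dd + 1)) := by
      intro i hi
      have h1 := Finset.mem_filter.1 hi
      obtain ⟨q, hqr, hqne⟩ : ∃ q, q < r ∧ Yc hk c (i+q) ≠ Yc hk c' (i+q) := by
        by_contra hno
        push_neg at hno
        exact h1.2 (by simp only [hPg]; exact fun q hq => hno q hq)
      refine Finset.mem_biUnion.2 ⟨i + q, ?_, ?_⟩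
      · refine Finset.mem_filter.2 ⟨Finset.mem_range.2 ?_, hqne⟩
        have := Finset.mem_range.1 h1.1
        omega
      · exact Finset.mem_Ico.2 ⟨by omega, by omega⟩
    have hBcard : B.card ≤ D2.card * r := by
      calc B.card ≤ (D2.biUnion (fun dd => Finset.Ico (dd + 1 - r) (dd + 1))).card :=
            Finset.card_le_card hBsub
      _ ≤ ∑ dd ∈ D2, (Finset.Ico (dd + 1 - r) (dd + 1)).card := Finset.card_biUnion_le
      _ ≤ ∑ _dd ∈ D2, r := Finset.sum_le_sum (fun dd _ => by rw [Nat.card_Ico]; omega)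
      _ = D2.card * r := by rw [Finset.sum_const, smul_eq_mul]
    have hgood : ∀ i ∈ (Finset.range n).filter Pg,
        shiftDist (shift^[i] (Yc hk c)) (shift^[i] (Yc hk c')) < τ := by
      intro i hi
      have h1 := (Finset.mem_filter.1 hi).2
      rw [hPg] at h1
      have hag : ∀ q, q < r → (shift^[i] (Yc hk c)) q = (shift^[i] (Yc hk c')) q := by
        intro q hq
        rw [shift_iter i (Yc hk c) q, shift_iter i (Yc hk c') q]
        rw [show q + i = i + q by ring]
        exact h1 q hq
      exact lt_of_le_of_lt (shiftDist_le_pow hag) hr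
    have hsubset : ↑((Finset.range n).filter Pg) ⊆
        {i | i < n ∧ shiftDist (shift^[i] (Yc hk c)) (shift^[i] (Yc hk c')) < τ} := by
      intro i hi
      rw [Finset.mem_coe] at hi
      exact ⟨Finset.mem_range.1 (Finset.mem_filter.1 hi).1, hgood i hi⟩
    have hpart := Finset.card_filter_add_card_filter_not (s := Finset.range n) (p := Pg)
    rw [Finset.card_range] at hpart
    have hncard : (n - B.card : ℕ) ≤
        ({i | i < n ∧ shiftDist (shift^[i] (Yc hk c)) (shift^[i] (Yc hk c')) < τ}).ncard := by
      have hfin : ({i | i < n ∧ shiftDist (shift^[i] (Yc hk c)) (shift^[i] (Yc hk c')) < τ}).Finite :=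
        (Set.finite_Iio n).subset (fun i hi => hi.1)
      have h3 := Set.ncard_le_ncard hsubset hfin
      rw [Set.ncard_coe_finset] at h3
      have hBeq : (Finset.filter (fun a => ¬ Pg a) (Finset.range n)).card = B.card := rfl
      omega
    have hn64 : (UU 1 t0) * 64^e ≤ n := by
      rw [hn, ← hte]
      exact UU_growth t0 e
    have hU1 : 1 ≤ UU 1 t0 := UU_pos (le_refl 1) t0
    have hBn : B.card ≤ n := le_trans (Finset.card_filter_le _ _) (le_of_eq (Finset.card_range _))
    have hnR : R ≤ n := by
      have h1 : e < 64^e := Nat.lt_pow_self (n := e) (by norm_num)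
      have h2 : 2*p < 2^(2*p) := Nat.lt_pow_self (by norm_num)
      rw [← he] at h2
      have h3 : 64^e ≤ UU 1 t0 * 64^e := Nat.le_mul_of_pos_left _ hU1
      have h4 : R ≤ p := le_max_right _ _
      omega
    have hnpos : 0 < n := by rw [hn]; exact UU_pos (le_refl 1) _
    have hkey : (B.card : ℝ) ≤ δ * n := by
      have h1 : (B.card : ℝ) ≤ (2^e * UU 1 t0 + r) * r := by
        have := le_trans hBcard (Nat.mul_le_mul_right r hD2card)
        exact_mod_cast this
      have h32 : ((2*r + 2*r*r)/δ : ℝ) < 32^e := by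
        calc ((2*r + 2*r*r)/δ : ℝ) < 32^a1 := ha1
        _ ≤ 32^e := by
            apply pow_le_pow_right₀ (by norm_num)
            have h5 : a1 ≤ p := le_max_left _ _
            have h6 : 2*p < 2^(2*p) := Nat.lt_pow_self (by norm_num)
            omega
      have h2 : (2*(r:ℝ) + 2*r*r) < δ * 32^e := by
        rw [div_lt_iff₀ hδ] at h32
        linarith
      have h3 : ((UU 1 t0 : ℝ)) * 64^e ≤ n := by exact_mod_cast hn64
      have h4 : (1:ℝ) ≤ UU 1 t0 := by exact_mod_cast hU1
      have h5 : (0:ℝ) < 2^e := by positivity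
      have h6 : ((64:ℝ))^e = 32^e * 2^e := by
        rw [← mul_pow]
        norm_num
      have h7 : (0:ℝ) ≤ r := by positivity
      have h8 : (1:ℝ) ≤ (2:ℝ)^e := one_le_pow₀ (by norm_num)
      have h9 : (1:ℝ) ≤ 2^e * (UU 1 t0:ℝ) := by nlinarith
      have h14 : (B.card:ℝ) ≤ (r:ℝ)*(2^e*(UU 1 t0:ℝ)) + r*r := by
        calc (B.card:ℝ) ≤ (2^e * (UU 1 t0:ℝ) + r) * r := h1
        _ = (r:ℝ)*(2^e*(UU 1 t0:ℝ)) + r*r := by ring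
      have hXnn : (0:ℝ) ≤ 2^e * (UU 1 t0:ℝ) := by positivity
      have h10a : (r:ℝ)*(2^e*(UU 1 t0:ℝ)) ≤ 2*r*(2^e*(UU 1 t0:ℝ)) := by
        linarith [mul_nonneg h7 hXnn]
      have h10b : (r:ℝ)*r ≤ 2*(r*r)*(2^e*(UU 1 t0:ℝ)) := by
        have hml := mul_le_mul_of_nonneg_left h9 (show (0:ℝ) ≤ 2*((r:ℝ)*r) by positivity)
        have hrr : (0:ℝ) ≤ (r:ℝ)*r := mul_nonneg h7 h7
        linarith
      have h10 : ((r:ℝ)*(2^e*(UU 1 t0:ℝ)) + r*r) ≤ (2*r + 2*r*r) * (2^e * (UU 1 t0:ℝ)) := by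
        have he2 : (2*(r:ℝ) + 2*r*r) * (2^e * (UU 1 t0:ℝ))
            = 2*r*(2^e*(UU 1 t0:ℝ)) + 2*((r:ℝ)*r)*(2^e*(UU 1 t0:ℝ)) := by ring
        linarith
      have h11 : (2*(r:ℝ) + 2*r*r) * (2^e * (UU 1 t0:ℝ)) ≤ (δ * 32^e) * (2^e * (UU 1 t0:ℝ)) :=
        mul_le_mul_of_nonneg_right h2.le (by positivity)
      have h12 : (δ * 32^e) * (2^e * ((UU 1 t0:ℕ):ℝ)) = δ * ((64:ℝ)^e * (UU 1 t0:ℝ)) := by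
        rw [h6]; ring
      have h13 : δ * ((64:ℝ)^e * (UU 1 t0:ℝ)) ≤ δ * n := by
        apply mul_le_mul_of_nonneg_left ?_ hδ.le
        calc (64:ℝ)^e * (UU 1 t0:ℝ) = (UU 1 t0:ℝ) * 64^e := by ring
        _ ≤ n := h3
      linarith
    refine ⟨n, hnR, ?_⟩
    have hcast : ((n - B.card : ℕ) : ℝ) = (n:ℝ) - B.card := by
      push_cast [Nat.cast_sub hBn]
      ring
    have hnposR : (0:ℝ) < n := by exact_mod_cast hnpos
    rw [PhiN]
    calc (1:ℝ) - δ = ((n:ℝ) - δ*n)/n := by field_simp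
    _ ≤ ((n:ℝ) - B.card)/n := by
        apply div_le_div_of_nonneg_right ?_ hnposR.le
        · linarith
    _ ≤ _ := by
        apply div_le_div_of_nonneg_right ?_ hnposR.le
        rw [← hcast]
        exact_mod_cast hncard
  apply le_antisymm
  · apply Filter.limsup_le_of_le
    · exact Filter.IsBoundedUnder.isCoboundedUnder_le
        ⟨0, Filter.eventually_map.mpr (Filter.Eventually.of_forall (fun n => PhiN_nonneg))⟩
    · exact Filter.Eventually.of_forall (fun n => PhiN_le_one)
  · apply le_of_forall_pos_le_add
    intro δ hδ
    have h1 : 1 - δ ≤ Filter.limsup (fun n => PhiN (Yc hk c) (Yc hk c') n τ) Filter.atTop := by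
      apply Filter.le_limsup_of_frequently_le
      · rw [Filter.frequently_atTop]
        intro a
        obtain ⟨n, hna, hp⟩ := hfreq δ hδ a
        exact ⟨n, hna, hp⟩
      · exact ⟨1, Filter.eventually_map.mpr (Filter.Eventually.of_forall (fun n => PhiN_le_one))⟩
    linarith

end PairLimsup


end ThmA

open ThmA in
/-- **Theorem A.** For `k ≥ 2`, the set `Rec(Σ_k) \ BR(Σ_k)` of points that are recurrent
but not Banach recurrent is dense in `Σ_k` and contains an uncountable DC1-scrambled subset. -/
theorem recurrent_not_banachRecurrent_dense_and_DC1 (k : ℕ) (hk : 2 ≤ k) :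
    ShiftDense {x : ℕ → Fin k | Recurrent x ∧ ¬ BanachRecurrent x} ∧
    ∃ S : Set (ℕ → Fin k), S ⊆ {x | Recurrent x ∧ ¬ BanachRecurrent x} ∧
      ¬ S.Countable ∧ DC1Scrambled S := by

  have hinj : Function.Injective (Yc hk) := by
    intro c c' he
    by_contra hcc
    obtain ⟨t, _, hdiff⟩ := bad_levels hk hcc 0
    apply hdiff
    have e1 : Yc hk c (UU 1 t + 0) = fillC hk c t :=
      YY_filler _ _ (le_refl 1) (gg_pos (le_refl 1) t)
    have e2 : Yc hk c' (UU 1 t + 0) = fillC hk c' t :=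
      YY_filler _ _ (le_refl 1) (gg_pos (le_refl 1) t)
    rw [← e1, ← e2, he]
  constructor
  · intro z ε hε
    obtain ⟨m₀, hm₀⟩ := exists_pow_lt_of_lt_one hε (by norm_num : (1:ℝ)/2 < 1)
    refine ⟨YY (m₀+1) (fun i => if i < m₀ then z i else sym1 hk) (fun _ => sym0 hk),
      ⟨?_, ?_⟩, ?_⟩
    · exact recurrent_YY _ _ (by omega)
    · apply notBR _ _ (by omega) (sym_ne hk) ?_ rfl
      show (if ((m₀+1)-1 : ℕ) < m₀ then z ((m₀+1)-1) else sym1 hk) = sym1 hk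
      norm_num
    · apply lt_of_le_of_lt ?_ hm₀
      apply shiftDist_le_pow
      intro i hi
      rw [YY_base _ _ (by omega) (show i < m₀+1 by omega)]
      simp [hi]
  · refine ⟨Set.range (Yc hk), ?_, ?_, ?_, ?_⟩
    · rintro x ⟨c, rfl⟩
      exact ⟨Yc_recurrent hk c, Yc_notBR hk c⟩
    · intro hc
      have h1 := hc.preimage hinj
      have h2 : Yc hk ⁻¹' Set.range (Yc hk) = Set.univ := by
        ext c
        simp only [Set.mem_preimage, Set.mem_range, Set.mem_univ, iff_true]
        exact ⟨c, rfl⟩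
      rw [h2] at h1
      have h3 := Set.countable_univ_iff.1 h1
      have e : Set ℕ ≃ (ℕ → Bool) := Equiv.arrowCongr (Equiv.refl ℕ) Equiv.propEquivBool
      obtain ⟨g, hg⟩ := (Countable.of_equiv _ e.symm).exists_injective_nat'
      exact Function.cantor_injective g hg
    · refine ⟨Yc hk (fun _ => false), ⟨_, rfl⟩, Yc hk (fun _ => true), ⟨_, rfl⟩, ?_⟩
      apply hinj.ne
      intro hfb
      have := congrFun hfb 0
      simp at this
    · rintro x ⟨c, rfl⟩ y ⟨c', rfl⟩ hxy
      have hcc : c ≠ c' := fun he => hxy (by rw [he])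
      exact ⟨⟨1/4, by norm_num, pair_liminf hk hcc⟩, fun τ hτ => pair_limsup hk c c' hτ⟩
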